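/- Let H be a semisimple Hopf algebra over an algebraically closed field k of characteristic 0 with normalized integral Λ, and V, W finite-dimensional H-modules. The composite (V ⊗ W)^H → Hom_H(V*, W) → Hom_H(W*, V) → (W ⊗ V)^H, where the outer maps are the canonical bijections A (A(v⊗w)(φ) = φ(v)w) and the middle map sends f to its transpose f* (using S² = id to identify V** = V), equals the map v ⊗ w ↦ Λ₁w ⊗ Λ₂v, i.e., the flip followed by the projection onto invariants. -/

import Mathlib

open TensorProduct

/-- The submodule of invariants of a module `M` over a Hopf algebra `H`, for an action given
by a linear map `act : H →ₗ[k] End(M)`: those `x` with `h·x = ε(h)·x` for all `h`. -/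
def hopfInvariants {k H M : Type*} [Field k] [Ring H] [HopfAlgebra k H]
    [AddCommGroup M] [Module k M] (act : H →ₗ[k] (M →ₗ[k] M)) : Submodule k M where
  carrier := {x | ∀ h : H, act h x = Coalgebra.counit (R := k) h • x}
  add_mem' := by
    intro a b ha hb h
    simp [map_add, ha h, hb h, smul_add]
  zero_mem' := by intro h; simp
  smul_mem' := by
    intro c x hx h
    rw [map_smul, hx h, smul_comm]


section Aux

open TensorProduct Coalgebra

variable {k H : Type*} [Field k] [Ring H] [HopfAlgebra k H]

local notation "S" => HopfAlgebra.antipode (R := k) (A := H)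

lemma sum_counit_smul_right {a : H} {ι : Type*} (r : Repr k a ι) :
    ∑ i ∈ r.index, counit (R := k) (r.left i) • r.right i = a := by
  have h1 := Coalgebra.sum_counit_tmul_eq r
  calc ∑ i ∈ r.index, counit (R := k) (r.left i) • r.right i
      = TensorProduct.lid k H (∑ i ∈ r.index, counit (R := k) (r.left i) ⊗ₜ r.right i) := by
        rw [map_sum]; simp
    _ = TensorProduct.lid k H ((1 : k) ⊗ₜ a) := by rw [h1]
    _ = a := by simp

lemma sum_counit_smul_left {a : H} {ι : Type*} (r : Repr k a ι) :
    ∑ i ∈ r.index, counit (R := k) (r.right i) • r.left i = a := by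
  have h1 := Coalgebra.sum_tmul_counit_eq r
  calc ∑ i ∈ r.index, counit (R := k) (r.right i) • r.left i
      = TensorProduct.rid k H (∑ i ∈ r.index, r.left i ⊗ₜ counit (R := k) (r.right i)) := by
        rw [map_sum]; simp
    _ = TensorProduct.rid k H (a ⊗ₜ (1 : k)) := by rw [h1]
    _ = a := by simp

lemma comul_mul_int (Λ : H) (hint : ∀ h : H, h * Λ = Coalgebra.counit (R := k) h • Λ)
    (h : H) : comul (R := k) h * comul Λ = counit (R := k) h • comul (R := k) Λ := by
  rw [← Bialgebra.comul_mul, hint h, map_smul]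

lemma int_swap (Λ : H) (hint : ∀ h : H, h * Λ = counit (R := k) h • Λ) (h : H) :
    ((1:H) ⊗ₜ[k] h) * comul (R := k) Λ = (S h ⊗ₜ[k] (1:H)) * comul (R := k) Λ := by
  set D := comul (R := k) Λ with hD
  set r := ℛ k h with hr
  have coas := Coalgebra.sum_tmul_tmul_eq r (fun i => ℛ k (r.left i)) (fun i => ℛ k (r.right i))
  let g : H →ₗ[k] H ⊗[k] H := ((TensorProduct.mk k H H).flip 1) ∘ₗ (HopfAlgebra.antipode (R := k))
  let Φ : H ⊗[k] (H ⊗[k] H) →ₗ[k] H ⊗[k] H :=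
    (LinearMap.mulRight k D) ∘ₗ (LinearMap.mul' k (H ⊗[k] H)) ∘ₗ
      (TensorProduct.map g LinearMap.id)
  have hΦ : ∀ (a b c : H), Φ (a ⊗ₜ (b ⊗ₜ c)) = ((S a ⊗ₜ[k] (1:H)) * (b ⊗ₜ[k] c)) * D := by
    intro a b c
    simp [Φ, g]
  have key := congrArg Φ coas
  simp only [map_sum, hΦ] at key
  have lhs_eq : ∑ i ∈ r.index, ∑ j ∈ (ℛ k (r.left i)).index,
      ((S ((ℛ k (r.left i)).left j) ⊗ₜ[k] (1:H)) *
        ((ℛ k (r.left i)).right j ⊗ₜ[k] r.right i)) * D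
      = ((1:H) ⊗ₜ[k] h) * D := by
    have step1 : ∀ i ∈ r.index, ∑ j ∈ (ℛ k (r.left i)).index,
        ((S ((ℛ k (r.left i)).left j) ⊗ₜ[k] (1:H)) *
          ((ℛ k (r.left i)).right j ⊗ₜ[k] r.right i)) * D
        = counit (R := k) (r.left i) • (((1:H) ⊗ₜ[k] r.right i) * D) := by
      intro i _
      rw [← Finset.sum_mul]
      have : ∑ j ∈ (ℛ k (r.left i)).index,
          (S ((ℛ k (r.left i)).left j) ⊗ₜ[k] (1:H)) *
            ((ℛ k (r.left i)).right j ⊗ₜ[k] r.right i)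
          = counit (R := k) (r.left i) • ((1:H) ⊗ₜ[k] r.right i) := by
        calc ∑ j ∈ (ℛ k (r.left i)).index,
            (S ((ℛ k (r.left i)).left j) ⊗ₜ[k] (1:H)) *
              ((ℛ k (r.left i)).right j ⊗ₜ[k] r.right i)
            = ∑ j ∈ (ℛ k (r.left i)).index,
              (S ((ℛ k (r.left i)).left j) * (ℛ k (r.left i)).right j) ⊗ₜ[k] r.right i := by
              refine Finset.sum_congr rfl fun j _ => ?_
              rw [Algebra.TensorProduct.tmul_mul_tmul, one_mul]
          _ = (∑ j ∈ (ℛ k (r.left i)).index,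
              S ((ℛ k (r.left i)).left j) * (ℛ k (r.left i)).right j) ⊗ₜ[k] r.right i := by
              rw [TensorProduct.sum_tmul]
          _ = (counit (R := k) (r.left i) • (1:H)) ⊗ₜ[k] r.right i := by
              rw [HopfAlgebra.sum_antipode_mul_eq_smul]
          _ = counit (R := k) (r.left i) • ((1:H) ⊗ₜ[k] r.right i) := by
              rw [smul_tmul']
      rw [this, smul_mul_assoc]
    rw [Finset.sum_congr rfl step1]
    calc ∑ i ∈ r.index, counit (R := k) (r.left i) • (((1:H) ⊗ₜ[k] r.right i) * D)
        = (∑ i ∈ r.index, (1:H) ⊗ₜ[k] (counit (R := k) (r.left i) • r.right i)) * D := by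
          rw [Finset.sum_mul]
          refine Finset.sum_congr rfl fun i _ => ?_
          rw [tmul_smul, smul_mul_assoc]
      _ = ((1:H) ⊗ₜ[k] h) * D := by rw [← TensorProduct.tmul_sum, sum_counit_smul_right]
  have rhs_eq : ∑ i ∈ r.index, ∑ j ∈ (ℛ k (r.right i)).index,
      ((S (r.left i) ⊗ₜ[k] (1:H)) *
        ((ℛ k (r.right i)).left j ⊗ₜ[k] (ℛ k (r.right i)).right j)) * D
      = (S h ⊗ₜ[k] (1:H)) * D := by
    have step1 : ∀ i ∈ r.index, ∑ j ∈ (ℛ k (r.right i)).index,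
        ((S (r.left i) ⊗ₜ[k] (1:H)) *
          ((ℛ k (r.right i)).left j ⊗ₜ[k] (ℛ k (r.right i)).right j)) * D
        = counit (R := k) (r.right i) • ((S (r.left i) ⊗ₜ[k] (1:H)) * D) := by
      intro i _
      calc ∑ j ∈ (ℛ k (r.right i)).index,
          ((S (r.left i) ⊗ₜ[k] (1:H)) *
            ((ℛ k (r.right i)).left j ⊗ₜ[k] (ℛ k (r.right i)).right j)) * D
          = (S (r.left i) ⊗ₜ[k] (1:H)) *
            ((∑ j ∈ (ℛ k (r.right i)).index,
              (ℛ k (r.right i)).left j ⊗ₜ[k] (ℛ k (r.right i)).right j) * D) := by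
            rw [Finset.sum_mul, Finset.mul_sum]
            refine Finset.sum_congr rfl fun j _ => ?_
            rw [mul_assoc]
        _ = (S (r.left i) ⊗ₜ[k] (1:H)) * (counit (R := k) (r.right i) • D) := by
            rw [(ℛ k (r.right i)).eq, comul_mul_int Λ hint]
        _ = counit (R := k) (r.right i) • ((S (r.left i) ⊗ₜ[k] (1:H)) * D) := by
            rw [mul_smul_comm]
    rw [Finset.sum_congr rfl step1]
    calc ∑ i ∈ r.index, counit (R := k) (r.right i) • ((S (r.left i) ⊗ₜ[k] (1:H)) * D)
        = (∑ i ∈ r.index, (counit (R := k) (r.right i) • S (r.left i)) ⊗ₜ[k] (1:H)) * D := by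
          rw [Finset.sum_mul]
          refine Finset.sum_congr rfl fun i _ => ?_
          rw [← smul_tmul', smul_mul_assoc]
      _ = (S h ⊗ₜ[k] (1:H)) * D := by
          rw [← TensorProduct.sum_tmul]
          congr 2
          simp only [← map_smul, ← map_sum]
          rw [sum_counit_smul_left]
  calc ((1:H) ⊗ₜ[k] h) * D = _ := lhs_eq.symm
    _ = _ := key
    _ = (S h ⊗ₜ[k] (1:H)) * D := rhs_eq

lemma int_swap' (Λ : H) (hint : ∀ h : H, h * Λ = counit (R := k) h • Λ)
    (hS2 : ∀ h : H, S (S h) = h) (h : H) :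
    (h ⊗ₜ[k] (1:H)) * comul (R := k) Λ = ((1:H) ⊗ₜ[k] S h) * comul (R := k) Λ := by
  have := int_swap Λ hint (S h)
  rw [hS2] at this
  exact this.symm

lemma int_move (Λ : H) (hint : ∀ h : H, h * Λ = counit (R := k) h • Λ)
    (hS2 : ∀ h : H, S (S h) = h) (a b : H) :
    (a ⊗ₜ[k] b) * comul (R := k) Λ = ((1:H) ⊗ₜ[k] (b * S a)) * comul (R := k) Λ := by
  have h1 : (a ⊗ₜ[k] b) = ((1:H) ⊗ₜ[k] b) * (a ⊗ₜ[k] (1:H)) := by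
    rw [Algebra.TensorProduct.tmul_mul_tmul, one_mul, mul_one]
  rw [h1, mul_assoc, int_swap' Λ hint hS2, ← mul_assoc,
    Algebra.TensorProduct.tmul_mul_tmul, one_mul]

lemma comm_comul_mul (Λ : H) (hint : ∀ h : H, h * Λ = counit (R := k) h • Λ)
    (hnorm : counit (R := k) Λ = 1) (hS2 : ∀ h : H, S (S h) = h) :
    (TensorProduct.comm k H H) (comul (R := k) Λ) * comul (R := k) Λ = comul (R := k) Λ := by
  set D := comul (R := k) Λ with hD
  set r := ℛ k Λ with hr
  have h1 : (TensorProduct.comm k H H) D = ∑ i ∈ r.index, r.right i ⊗ₜ[k] r.left i := by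
    rw [hD, ← r.eq, map_sum]
    exact Finset.sum_congr rfl fun i _ => by rw [TensorProduct.comm_tmul]
  rw [h1, Finset.sum_mul]
  calc ∑ i ∈ r.index, (r.right i ⊗ₜ[k] r.left i) * D
      = ∑ i ∈ r.index, ((1:H) ⊗ₜ[k] (r.left i * S (r.right i))) * D := by
        refine Finset.sum_congr rfl fun i _ => int_move Λ hint hS2 _ _
    _ = ((1:H) ⊗ₜ[k] (∑ i ∈ r.index, r.left i * S (r.right i))) * D := by
        rw [← Finset.sum_mul, ← TensorProduct.tmul_sum]
    _ = D := by
        rw [HopfAlgebra.sum_mul_antipode_eq_smul r, hnorm, one_smul,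
          ← Algebra.TensorProduct.one_def, one_mul]

section rep
variable {M N : Type*} [AddCommGroup M] [Module k M] [AddCommGroup N] [Module k N]

/-- The action of `H ⊗ H` on `M ⊗ N` through two representations. -/
noncomputable def actT (ρM : H →ₐ[k] Module.End k M) (ρN : H →ₐ[k] Module.End k N) :
    H ⊗[k] H →ₗ[k] (M ⊗[k] N →ₗ[k] M ⊗[k] N) :=
  TensorProduct.homTensorHomMap (RingHom.id k) M N M N ∘ₗ
    TensorProduct.map ρM.toLinearMap ρN.toLinearMap

lemma actT_tmul (ρM : H →ₐ[k] Module.End k M) (ρN : H →ₐ[k] Module.End k N)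
    (a b : H) (m : M) (n : N) :
    actT ρM ρN (a ⊗ₜ[k] b) (m ⊗ₜ[k] n) = (ρM a m) ⊗ₜ[k] (ρN b n) := by
  simp [actT]

lemma actT_mul (ρM : H →ₐ[k] Module.End k M) (ρN : H →ₐ[k] Module.End k N)
    (u v : H ⊗[k] H) (z : M ⊗[k] N) :
    actT ρM ρN (u * v) z = actT ρM ρN u (actT ρM ρN v z) := by
  induction u using TensorProduct.induction_on with
  | zero => simp
  | add u₁ u₂ h₁ h₂ => rw [add_mul, map_add, map_add, LinearMap.add_apply,
      LinearMap.add_apply, h₁, h₂]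
  | tmul a b =>
    induction v using TensorProduct.induction_on with
    | zero => simp
    | add v₁ v₂ h₁ h₂ => rw [mul_add, map_add, LinearMap.add_apply, h₁, h₂, map_add, LinearMap.add_apply, map_add]
    | tmul c d =>
      induction z using TensorProduct.induction_on with
      | zero => simp
      | add z₁ z₂ h₁ h₂ => rw [map_add, map_add, h₁, h₂, map_add]
      | tmul m n =>
        rw [Algebra.TensorProduct.tmul_mul_tmul, actT_tmul, actT_tmul, actT_tmul,
          map_mul, map_mul]
        rfl

lemma actT_comm (ρM : H →ₐ[k] Module.End k M) (ρN : H →ₐ[k] Module.End k N)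
    (u : H ⊗[k] H) (z : M ⊗[k] N) :
    actT ρN ρM u (TensorProduct.comm k M N z)
      = TensorProduct.comm k M N (actT ρM ρN (TensorProduct.comm k H H u) z) := by
  induction u using TensorProduct.induction_on with
  | zero => simp
  | add u₁ u₂ h₁ h₂ => rw [map_add, map_add, LinearMap.add_apply, map_add,
      LinearMap.add_apply, h₁, h₂, map_add]
  | tmul a b =>
    induction z using TensorProduct.induction_on with
    | zero => simp
    | add z₁ z₂ h₁ h₂ => rw [map_add, map_add, h₁, h₂, map_add, map_add]
    | tmul m n => rw [TensorProduct.comm_tmul, TensorProduct.comm_tmul, actT_tmul,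
        actT_tmul, TensorProduct.comm_tmul]

end rep

lemma flip_transpose {V W : Type*} [AddCommGroup V] [Module k V] [FiniteDimensional k V]
    [AddCommGroup W] [Module k W] [FiniteDimensional k W] (x : V ⊗[k] W) :
    (dualTensorHom k (Module.Dual k W) V ∘ₗ
        TensorProduct.map (Module.Dual.eval k W) LinearMap.id) (TensorProduct.comm k V W x)
      = (Module.evalEquiv k V).symm.toLinearMap ∘ₗ
          (((dualTensorHom k (Module.Dual k V) W ∘ₗ
            TensorProduct.map (Module.Dual.eval k V) LinearMap.id) x).dualMap) := by
  induction x using TensorProduct.induction_on with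
  | zero =>
    have : (dualTensorHom k (Module.Dual k V) W)
        ((TensorProduct.map (Module.Dual.eval k V) LinearMap.id) (0 : V ⊗[k] W)) = 0 := by simp
    rw [map_zero]
    ext ψ
    have h0 : (LinearMap.dualMap (0 : Module.Dual k V →ₗ[k] W)) ψ = 0 := by
      ext φ; simp [LinearMap.dualMap_apply]
    simp [h0]
  | add a b ha hb =>
    ext ψ
    have ha' := LinearMap.congr_fun ha ψ
    have hb' := LinearMap.congr_fun hb ψ
    simp only [map_add, LinearMap.add_apply, LinearMap.coe_comp, Function.comp_apply,
      LinearMap.dualMap_apply, LinearMap.comp_add, LinearEquiv.coe_coe] at *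
    rw [ha', hb', ← map_add]
    congr 1
    ext φ
    simp
  | tmul v w =>
    ext ψ
    simp only [LinearMap.coe_comp, Function.comp_apply, TensorProduct.comm_tmul,
      TensorProduct.map_tmul, dualTensorHom_apply, LinearMap.id_coe, id_eq,
      LinearEquiv.coe_coe, LinearMap.dualMap_apply]
    rw [eq_comm, LinearEquiv.symm_apply_eq]
    ext φ
    simp only [LinearMap.comp_apply, dualTensorHom_apply, map_smul, Module.evalEquiv_apply,
      Module.Dual.eval_apply, LinearMap.smul_apply, smul_eq_mul, map_smul]
    simp [LinearMap.dualMap_apply, dualTensorHom_apply, mul_comm]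

end Aux

/-- Let `H` be a semisimple Hopf algebra over an algebraically closed field `k`
of characteristic 0 with normalized integral `Λ` and `S² = id` (Larson-Radford), and `V`, `W`
finite-dimensional `H`-modules.  The composite
`(V ⊗ W)^H → Hom_H(V*, W) → Hom_H(W*, V) → (W ⊗ V)^H`, where the outer maps are the
canonical bijections `A` (`A(v⊗w)(φ) = φ(v)w`) and the middle map sends `f` to its transpose
`f*` (using `V** = V`), equals the map `v ⊗ w ↦ Λ₁w ⊗ Λ₂v`, i.e. the flip followed by the
projection onto invariants.  Equivalently: for `x` invariant, `Λ·τ(x)` is invariant and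
`A(Λ·τ(x))` is the transpose of `A(x)`. -/
theorem composite_eq_flip_projection {k H : Type*} [Field k] [IsAlgClosed k] [CharZero k]
    [Ring H] [HopfAlgebra k H] (Λ : H)
    (hint : ∀ h : H, h * Λ = Coalgebra.counit (R := k) h • Λ)
    (hnorm : Coalgebra.counit (R := k) Λ = 1)
    (hS2 : ∀ h : H, HopfAlgebra.antipode (R := k) (HopfAlgebra.antipode (R := k) h) = h)
    {V W : Type*} [AddCommGroup V] [Module k V] [FiniteDimensional k V]
    [AddCommGroup W] [Module k W] [FiniteDimensional k W]
    (ρV : H →ₐ[k] Module.End k V) (ρW : H →ₐ[k] Module.End k W) :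
    ∀ x ∈ hopfInvariants (TensorProduct.homTensorHomMap (RingHom.id k) V W V W ∘ₗ
        TensorProduct.map ρV.toLinearMap ρW.toLinearMap ∘ₗ Coalgebra.comul (R := k) (A := H)),
      (TensorProduct.homTensorHomMap (RingHom.id k) W V W V ∘ₗ
          TensorProduct.map ρW.toLinearMap ρV.toLinearMap ∘ₗ
            Coalgebra.comul (R := k) (A := H)) Λ ((TensorProduct.comm k V W) x)
        ∈ hopfInvariants (TensorProduct.homTensorHomMap (RingHom.id k) W V W V ∘ₗ
            TensorProduct.map ρW.toLinearMap ρV.toLinearMap ∘ₗ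
              Coalgebra.comul (R := k) (A := H)) ∧
      (dualTensorHom k (Module.Dual k W) V ∘ₗ
          TensorProduct.map (Module.Dual.eval k W) LinearMap.id)
        ((TensorProduct.homTensorHomMap (RingHom.id k) W V W V ∘ₗ
          TensorProduct.map ρW.toLinearMap ρV.toLinearMap ∘ₗ
            Coalgebra.comul (R := k) (A := H)) Λ ((TensorProduct.comm k V W) x))
        = (Module.evalEquiv k V).symm.toLinearMap ∘ₗ
            (((dualTensorHom k (Module.Dual k V) W ∘ₗ
              TensorProduct.map (Module.Dual.eval k V) LinearMap.id) x).dualMap) := by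

  intro x hx
  have hx' : ∀ h : H, actT ρV ρW (Coalgebra.comul (R := k) h) x
      = Coalgebra.counit (R := k) h • x := fun h => hx h
  have hxΛ : actT ρV ρW (Coalgebra.comul (R := k) Λ) x = x := by
    rw [hx' Λ, hnorm, one_smul]
  have hmulWV : ∀ (h : H) (z : W ⊗[k] V),
      actT ρW ρV (Coalgebra.comul (R := k) h) (actT ρW ρV (Coalgebra.comul (R := k) Λ) z)
        = Coalgebra.counit (R := k) h • actT ρW ρV (Coalgebra.comul (R := k) Λ) z := by
    intro h z
    rw [← actT_mul, comul_mul_int Λ hint, map_smul, LinearMap.smul_apply]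
  constructor
  · exact fun h => hmulWV h ((TensorProduct.comm k V W) x)
  · have step1 : (TensorProduct.homTensorHomMap (RingHom.id k) W V W V ∘ₗ
          TensorProduct.map ρW.toLinearMap ρV.toLinearMap ∘ₗ
            Coalgebra.comul (R := k) (A := H)) Λ ((TensorProduct.comm k V W) x)
        = (TensorProduct.comm k V W) x := by
      show actT ρW ρV (Coalgebra.comul (R := k) Λ) ((TensorProduct.comm k V W) x) = _
      rw [actT_comm ρV ρW]
      congr 1
      calc actT ρV ρW (TensorProduct.comm k H H (Coalgebra.comul (R := k) Λ)) x
          = actT ρV ρW (TensorProduct.comm k H H (Coalgebra.comul (R := k) Λ))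
              (actT ρV ρW (Coalgebra.comul (R := k) Λ) x) := by rw [hxΛ]
        _ = actT ρV ρW (TensorProduct.comm k H H (Coalgebra.comul (R := k) Λ) *
              Coalgebra.comul (R := k) Λ) x := (actT_mul _ _ _ _ _).symm
        _ = actT ρV ρW (Coalgebra.comul (R := k) Λ) x := by
              rw [comm_comul_mul Λ hint hnorm hS2]
        _ = x := hxΛ
    rw [step1]
    exact flip_transpose x
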